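/- Let z ∈ ℝⁿ and 1 ≤ s ≤ n. The vector ẑ obtained by keeping the s largest-magnitude entries of z and zeroing the rest is a minimizer of x ↦ ‖z − x‖₂² over {x ∈ ℝⁿ : ‖x‖₀ ≤ s}. -/
import Mathlib


theorem stmt_13 (n s : ℕ) (hs : 1 ≤ s) (hn : s ≤ n) (z : Fin n → ℝ)
    (S : Finset (Fin n)) (hcard : S.card = s)
    (htop : ∀ i ∈ S, ∀ j ∉ S, |z j| ≤ |z i|) :
    ((Finset.univ.filter fun j => (if j ∈ S then z j else 0) ≠ 0).card ≤ s) ∧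
    ∀ x : Fin n → ℝ, (Finset.univ.filter fun j => x j ≠ 0).card ≤ s →
      (∑ j, (z j - if j ∈ S then z j else 0) ^ 2) ≤ ∑ j, (z j - x j) ^ 2 := by
  constructor
  · calc (Finset.univ.filter fun j => (if j ∈ S then z j else 0) ≠ 0).card
        ≤ S.card := by
          apply Finset.card_le_card
          intro j hj
          simp only [Finset.mem_filter] at hj
          by_contra h
          simp [h] at hj
    _ = s := hcard
  · intro x hx
    set T := Finset.univ.filter (fun j => x j ≠ 0) with hT
    -- S nonempty, get min element
    have hSne : S.Nonempty := Finset.card_pos.1 (by omega)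
    obtain ⟨i₀, hi₀S, hmin⟩ := S.exists_min_image (fun i => z i ^ 2) hSne
    -- LHS equals sum over Sᶜ of z j ^ 2
    have hL : (∑ j, (z j - if j ∈ S then z j else 0) ^ 2) = ∑ j ∈ Sᶜ, z j ^ 2 := by
      rw [← Finset.sum_add_sum_compl S]
      have h1 : ∑ j ∈ S, (z j - if j ∈ S then z j else 0) ^ 2 = 0 := by
        apply Finset.sum_eq_zero
        intro j hj; simp [hj]
      have h2 : ∑ j ∈ Sᶜ, (z j - if j ∈ S then z j else 0) ^ 2 = ∑ j ∈ Sᶜ, z j ^ 2 := by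
        apply Finset.sum_congr rfl
        intro j hj
        simp [Finset.mem_compl.1 hj]
      rw [h1, h2, zero_add]
    -- RHS ≥ sum over Tᶜ of z j ^ 2
    have hR : ∑ j ∈ Tᶜ, z j ^ 2 ≤ ∑ j, (z j - x j) ^ 2 := by
      rw [← Finset.sum_add_sum_compl T (fun j => (z j - x j) ^ 2)]
      have h2 : ∑ j ∈ Tᶜ, z j ^ 2 = ∑ j ∈ Tᶜ, (z j - x j) ^ 2 := by
        apply Finset.sum_congr rfl
        intro j hj
        have : x j = 0 := by
          have := Finset.mem_compl.1 hj
          simpa [hT] using this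
        simp [this]
      rw [h2]
      have : (0:ℝ) ≤ ∑ j ∈ T, (z j - x j) ^ 2 :=
        Finset.sum_nonneg fun j _ => sq_nonneg _
      linarith
    rw [hL]
    refine le_trans ?_ hR
    -- reduce to ∑_T z² ≤ ∑_S z²
    have key : ∑ j ∈ T \ S, z j ^ 2 ≤ ∑ j ∈ S \ T, z j ^ 2 := by
      have hcle : (T \ S).card ≤ (S \ T).card := by
        have h1 := Finset.card_sdiff_add_card_inter T S
        have h2 := Finset.card_sdiff_add_card_inter S T
        have h3 : (T ∩ S).card = (S ∩ T).card := by rw [Finset.inter_comm]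
        have hTs : T.card ≤ s := hx
        omega
      have c := z i₀ ^ 2
      calc ∑ j ∈ T \ S, z j ^ 2 ≤ (T \ S).card • (z i₀ ^ 2) := by
            apply Finset.sum_le_card_nsmul
            intro j hj
            have hjS : j ∉ S := (Finset.mem_sdiff.1 hj).2
            have := htop i₀ hi₀S j hjS
            calc z j ^ 2 = |z j| ^ 2 := (sq_abs _).symm
              _ ≤ |z i₀| ^ 2 := pow_le_pow_left₀ (abs_nonneg _) this 2
              _ = z i₀ ^ 2 := sq_abs _
        _ ≤ (S \ T).card • (z i₀ ^ 2) := by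
            rw [nsmul_eq_mul, nsmul_eq_mul]
            exact mul_le_mul_of_nonneg_right (Nat.cast_le.2 hcle) (sq_nonneg _)
        _ ≤ ∑ j ∈ S \ T, z j ^ 2 := by
            apply Finset.card_nsmul_le_sum
            intro j hj
            exact hmin j (Finset.mem_sdiff.1 hj).1
    -- ∑_{Sᶜ} ≤ ∑_{Tᶜ}
    have htot := Finset.sum_add_sum_compl S (fun j => z j ^ 2)
    have htot2 := Finset.sum_add_sum_compl T (fun j => z j ^ 2)
    have hS : ∑ j ∈ S, z j ^ 2 = ∑ j ∈ S ∩ T, z j ^ 2 + ∑ j ∈ S \ T, z j ^ 2 := by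
      rw [← Finset.sum_inter_add_sum_sdiff]
    have hT' : ∑ j ∈ T, z j ^ 2 = ∑ j ∈ T ∩ S, z j ^ 2 + ∑ j ∈ T \ S, z j ^ 2 := by
      rw [← Finset.sum_inter_add_sum_sdiff]
    have hTS : ∑ j ∈ T ∩ S, z j ^ 2 = ∑ j ∈ S ∩ T, z j ^ 2 := by rw [Finset.inter_comm]
    linarith
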